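/- Let G, I : [0, x₀) → ℝ be continuous with I > 0, and suppose η₀ is a positive solution of the Riccati equation η' = G + I·η² on [0, x₀) with η₀(0) < 1. If ∫₀ˣ e^{∫₀ˢ 2I(ξ)η₀(ξ)dξ}·I(s) ds < 1/(1 - η₀(0)) for every x ∈ [0, x₀), then the solution η̄ of η̄' = G + I·η̄², η̄(0) = 1, exists on all of [0, x₀) and is given by η̄(x) = η₀(x) + e^{∫₀ˣ 2Iη₀} / (1/(1-η₀(0)) - ∫₀ˣ e^{∫₀ˢ 2Iη₀}·I(s) ds). -/

import Mathlib

open Real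

theorem stmt_14 (x₀ : ℝ) (hx₀ : 0 < x₀) (G I η₀ : ℝ → ℝ)
    (hGcont : ContinuousOn G (Set.Ico 0 x₀)) (hIcont : ContinuousOn I (Set.Ico 0 x₀))
    (hIpos : ∀ x ∈ Set.Ico 0 x₀, 0 < I x)
    (hηpos : ∀ x ∈ Set.Ico 0 x₀, 0 < η₀ x)
    (hη0 : η₀ 0 < 1)
    (hηode : ∀ x ∈ Set.Ico 0 x₀, HasDerivAt η₀ (G x + I x * (η₀ x)^2) x)
    (hbound : ∀ x ∈ Set.Ico 0 x₀,
      (∫ s in (0:ℝ)..x, Real.exp (∫ t in (0:ℝ)..s, 2 * I t * η₀ t) * I s)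
        < 1 / (1 - η₀ 0)) :
    ∃ ηb : ℝ → ℝ, ηb 0 = 1 ∧
      (∀ x ∈ Set.Ico 0 x₀, HasDerivAt ηb (G x + I x * (ηb x)^2) x) ∧
      (∀ x ∈ Set.Ico 0 x₀,
        ηb x = η₀ x + Real.exp (∫ t in (0:ℝ)..x, 2 * I t * η₀ t) /
          (1 / (1 - η₀ 0) -
            ∫ s in (0:ℝ)..x, Real.exp (∫ t in (0:ℝ)..s, 2 * I t * η₀ t) * I s)) := by
  classical
  set g : ℝ → ℝ := fun t => 2 * I t * η₀ t with hg_def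
  set A : ℝ → ℝ := fun x => ∫ t in (0:ℝ)..x, g t with hA_def
  set E : ℝ → ℝ := fun x => Real.exp (A x) with hE_def
  set f : ℝ → ℝ := fun s => E s * I s with hf_def
  set F : ℝ → ℝ := fun x => ∫ s in (0:ℝ)..x, f s with hF_def
  set K : ℝ := 1 / (1 - η₀ 0) with hK_def
  set D : ℝ → ℝ := fun x => K - F x with hD_def
  have hK0 : (0:ℝ) < 1 - η₀ 0 := by linarith
  -- subset facts
  have hsub : ∀ x ∈ Set.Ico (0:ℝ) x₀, Set.uIcc (0:ℝ) x ⊆ Set.Ico 0 x₀ := by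
    intro x hx
    rw [Set.uIcc_of_le hx.1]
    exact fun t ht => ⟨ht.1, lt_of_le_of_lt ht.2 hx.2⟩
  have hsubIoo : Set.Ioo (0:ℝ) x₀ ⊆ Set.Ico 0 x₀ := Set.Ioo_subset_Ico_self
  -- continuity facts
  have hηcont : ContinuousOn η₀ (Set.Ico 0 x₀) :=
    fun x hx => (hηode x hx).continuousAt.continuousWithinAt
  have hgcont : ContinuousOn g (Set.Ico 0 x₀) :=
    (continuousOn_const.mul hIcont).mul hηcont
  have hgint : ∀ x ∈ Set.Ico (0:ℝ) x₀,
      IntervalIntegrable g MeasureTheory.volume 0 x :=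
    fun x hx => (hgcont.mono (hsub x hx)).intervalIntegrable
  have hmemIci : Set.Ico (0:ℝ) x₀ ∈ nhdsWithin (0:ℝ) (Set.Ici 0) := by
    rw [mem_nhdsWithin_iff_exists_mem_nhds_inter]
    exact ⟨Set.Iio x₀, Iio_mem_nhds hx₀, fun y hy => ⟨hy.2, hy.1⟩⟩
  have hmemIoi : Set.Ico (0:ℝ) x₀ ∈ nhdsWithin (0:ℝ) (Set.Ioi 0) :=
    nhdsWithin_mono 0 Set.Ioi_subset_Ici_self hmemIci
  have hAcont : ContinuousOn A (Set.Ico 0 x₀) := by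
    intro b hb
    obtain ⟨b', hb1, hb2⟩ := exists_between hb.2
    have hb'mem : b' ∈ Set.Ico (0:ℝ) x₀ := ⟨le_trans hb.1 hb1.le, hb2⟩
    have h1 : ContinuousOn A (Set.uIcc (0:ℝ) b') :=
      intervalIntegral.continuousOn_primitive_interval
        ((hgcont.mono (hsub b' hb'mem)).integrableOn_uIcc)
    have hmem : Set.uIcc (0:ℝ) b' ∈ nhdsWithin b (Set.Ico 0 x₀) := by
      rw [mem_nhdsWithin_iff_exists_mem_nhds_inter]
      refine ⟨Set.Iio b', Iio_mem_nhds hb1, fun y hy => ?_⟩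
      rw [Set.uIcc_of_le hb'mem.1]
      exact ⟨hy.2.1, hy.1.le⟩
    exact (h1 b (by rw [Set.uIcc_of_le hb'mem.1]; exact ⟨hb.1, hb1.le⟩)).mono_of_mem_nhdsWithin hmem
  have hEcont : ContinuousOn E (Set.Ico 0 x₀) :=
    Real.continuous_exp.comp_continuousOn hAcont
  have hfcont : ContinuousOn f (Set.Ico 0 x₀) := hEcont.mul hIcont
  have hfint : ∀ x ∈ Set.Ico (0:ℝ) x₀,
      IntervalIntegrable f MeasureTheory.volume 0 x :=
    fun x hx => (hfcont.mono (hsub x hx)).intervalIntegrable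
  -- positivity of D
  have hDpos : ∀ x ∈ Set.Ico (0:ℝ) x₀, 0 < D x := by
    intro x hx
    have := hbound x hx
    simp only [hD_def, hK_def, hF_def, hf_def, hE_def, hA_def, hg_def]
    linarith [this]
  -- values at 0
  have hA0 : A 0 = 0 := intervalIntegral.integral_same
  have hE0 : E 0 = 1 := by rw [hE_def]; simp [hA0]
  have hF0 : F 0 = 0 := intervalIntegral.integral_same
  have hD0 : D 0 = K := by simp [hD_def, hF0]
  have hKne : K ≠ 0 := by
    rw [hK_def]; positivity
  have hφ0 : η₀ 0 + E 0 / D 0 = 1 := by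
    rw [hE0, hD0, hK_def]
    field_simp
    ring
  -- derivative of A, E, F at interior points
  have hAderiv : ∀ x ∈ Set.Ioo (0:ℝ) x₀, HasDerivAt A (g x) x := by
    intro x hx
    exact intervalIntegral.integral_hasDerivAt_right (hgint x (hsubIoo hx))
      ((hgcont.mono hsubIoo).stronglyMeasurableAtFilter isOpen_Ioo x hx)
      ((hgcont.mono hsubIoo).continuousAt (Ioo_mem_nhds hx.1 hx.2))
  have hFderiv : ∀ x ∈ Set.Ioo (0:ℝ) x₀, HasDerivAt F (f x) x := by
    intro x hx
    exact intervalIntegral.integral_hasDerivAt_right (hfint x (hsubIoo hx))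
      ((hfcont.mono hsubIoo).stronglyMeasurableAtFilter isOpen_Ioo x hx)
      ((hfcont.mono hsubIoo).continuousAt (Ioo_mem_nhds hx.1 hx.2))
  -- derivative within Ici 0 at 0
  have hmeasg0 : StronglyMeasurableAtFilter g
      (nhdsWithin (0:ℝ) (Set.Ioi 0)) MeasureTheory.volume :=
    ⟨Set.Ico 0 x₀, hmemIoi, hgcont.aestronglyMeasurable measurableSet_Ico⟩
  have hmeasf0 : StronglyMeasurableAtFilter f
      (nhdsWithin (0:ℝ) (Set.Ioi 0)) MeasureTheory.volume :=
    ⟨Set.Ico 0 x₀, hmemIoi, hfcont.aestronglyMeasurable measurableSet_Ico⟩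
  have h0mem : (0:ℝ) ∈ Set.Ico (0:ℝ) x₀ := ⟨le_refl 0, hx₀⟩
  have hA0deriv : HasDerivWithinAt A (g 0) (Set.Ici 0) 0 :=
    intervalIntegral.integral_hasDerivWithinAt_right (IntervalIntegrable.refl)
      hmeasg0 ((hgcont 0 h0mem).mono_of_mem_nhdsWithin hmemIoi)
  have hF0deriv : HasDerivWithinAt F (f 0) (Set.Ici 0) 0 :=
    intervalIntegral.integral_hasDerivWithinAt_right (IntervalIntegrable.refl)
      hmeasf0 ((hfcont 0 h0mem).mono_of_mem_nhdsWithin hmemIoi)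
  -- candidate solution
  set c : ℝ := G 0 + I 0 with hc_def
  set φ : ℝ → ℝ := fun x => η₀ x + E x / D x with hφ_def
  set ηb : ℝ → ℝ := fun x => if 0 ≤ x then φ x else 1 + c * x with hηb_def
  have hηb_eq : ∀ x ∈ Set.Ico (0:ℝ) x₀, ηb x = φ x := by
    intro x hx
    simp [hηb_def, hx.1]
  have hηb0 : ηb 0 = 1 := by
    rw [hηb_eq 0 h0mem, hφ_def]; exact hφ0
  -- derivative of φ
  have hφderiv : ∀ x ∈ Set.Ico (0:ℝ) x₀, ∀ (s : Set ℝ),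
      HasDerivWithinAt A (g x) s x → HasDerivWithinAt F (f x) s x →
      HasDerivWithinAt φ (G x + I x * (φ x)^2) s x := by
    intro x hx s hA hF
    have hDx : D x ≠ 0 := (hDpos x hx).ne'
    have hE' : HasDerivWithinAt E (E x * g x) s x := hA.exp
    have hD' : HasDerivWithinAt D (-(f x)) s x := by
      have h := (hasDerivWithinAt_const x s K).sub hF
      rw [zero_sub] at h
      exact h
    have hdiv : HasDerivWithinAt (fun y => E y / D y)
        ((E x * g x * D x - E x * (-(f x))) / (D x)^2) s x := hE'.div hD' hDx
    have h := ((hηode x hx).hasDerivWithinAt).add hdiv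
    refine h.congr_deriv ?_
    rw [hf_def, hg_def, hφ_def]
    field_simp
    ring
  refine ⟨ηb, hηb0, ?_, ?_⟩
  · intro x hx
    rcases eq_or_lt_of_le hx.1 with h0 | h0
    · -- x = 0
      subst h0
      have hright : HasDerivWithinAt ηb (G 0 + I 0 * (ηb 0)^2) (Set.Ici 0) 0 := by
        have := hφderiv 0 h0mem (Set.Ici 0) hA0deriv hF0deriv
        have hφ0' : φ 0 = 1 := hφ0
        refine (this.congr (fun y hy => ?_) ?_).congr_deriv ?_
        · simp [hηb_def, Set.mem_Ici.mp hy]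
        · simp [hηb_def]
        · rw [hφ0', hηb0]
      have hc_eq : c = G 0 + I 0 * (ηb 0)^2 := by
        rw [hηb0, hc_def]; ring
      have hleft : HasDerivWithinAt ηb (G 0 + I 0 * (ηb 0)^2) (Set.Iic 0) 0 := by
        have hL : HasDerivAt (fun y : ℝ => 1 + c * y) c 0 := by
          simpa using ((hasDerivAt_id (0:ℝ)).const_mul c).const_add 1
        rw [← hc_eq]
        refine (hL.hasDerivWithinAt).congr (fun y hy => ?_) ?_
        · rcases eq_or_lt_of_le (Set.mem_Iic.mp hy) with h | h
          · subst h; rw [hηb0]; ring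
          · simp [hηb_def, not_le.mpr h]
        · rw [hηb0]; ring
      have := hleft.union hright
      rw [Set.Iic_union_Ici, hasDerivWithinAt_univ] at this
      exact this
    · -- x > 0
      have hxIoo : x ∈ Set.Ioo (0:ℝ) x₀ := ⟨h0, hx.2⟩
      have hφd := hφderiv x hx Set.univ
        ((hAderiv x hxIoo).hasDerivWithinAt) ((hFderiv x hxIoo).hasDerivWithinAt)
      rw [hasDerivWithinAt_univ] at hφd
      have hev : ηb =ᶠ[nhds x] φ := by
        filter_upwards [Ioi_mem_nhds h0] with y hy
        simp [hηb_def, le_of_lt (Set.mem_Ioi.mp hy)]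
      have := hφd.congr_of_eventuallyEq hev
      rwa [← hηb_eq x hx] at this
  · intro x hx
    rw [hηb_eq x hx, hφ_def]
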